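/- arXiv:1706.02405 — 2 statements merged into one kernel-verified Lean document; each statement's English description precedes it below -/
import Mathlib

section
/- Let V and W be finite-dimensional real inner product spaces, let P be an endomorphism of V such that no complex eigenvalue λ of (the complexification of) P has −λ also an eigenvalue (in particular P and P² + I are invertible), let c ∈ ℝ, let ψ : V → ℝ be linear and ν : V → W a linear map. Set Q = νᵗν + c·ψᵗψ, ρ = Pᵗ∘Q∘P, T = −Pᵗ − (Pᵗ)⁻¹, and L = (P² + I)⁻¹∘P². Let X ∈ End(V) be the unique solution of the equation Xᵗ∘P + Pᵗ∘Xᵗ = −T∘ρ. Then: (1) X + Xᵗ = Q + ρ; (2) T∘X = Xᵗ∘Tᵗ; and (3) X∘L + Lᵗ∘Xᵗ = ρ. -/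
open scoped TensorProduct

variable {V W : Type*}

/-- `νᵗν`, the symmetric endomorphism `u ↦ νᵗ(ν u)` associated to a linear map `ν`. -/
noncomputable def gram [NormedAddCommGroup V] [InnerProductSpace ℝ V] [FiniteDimensional ℝ V]
    [NormedAddCommGroup W] [InnerProductSpace ℝ W] [FiniteDimensional ℝ W]
    (ν : V →ₗ[ℝ] W) : Module.End ℝ V :=
  LinearMap.adjoint ν ∘ₗ ν

section aux
open Polynomial Matrix


lemma matrix_charpoly_eval {n R : Type*} [Fintype n] [DecidableEq n] [CommRing R]
    (M : Matrix n n R) (r : R) :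
    M.charpoly.eval r = (Matrix.scalar n r - M).det := by
  rw [Matrix.charpoly, _root_.eval_det, Matrix.matPolyEquiv_charmatrix]
  simp

lemma end_hasEigenvalue_iff_isRoot_charpoly {K V : Type*} [Field K] [AddCommGroup V] [Module K V]
    [FiniteDimensional K V] (f : Module.End K V) (μ : K) :
    f.HasEigenvalue μ ↔ (LinearMap.charpoly f).IsRoot μ := by
  constructor
  · intro h
    exact (Module.End.hasEigenvalue_iff_isRoot.mp h).dvd (LinearMap.minpoly_dvd_charpoly f)
  · intro h
    have hb : LinearMap.det (μ • (1 : Module.End K V) - f) = 0 := by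
      classical
      let b := Module.finBasis K V
      rw [← LinearMap.det_toMatrix b]
      have : LinearMap.toMatrix b b (μ • (1 : Module.End K V) - f)
          = Matrix.scalar _ μ - LinearMap.toMatrix b b f := by
        rw [map_sub, _root_.map_smul, LinearMap.toMatrix_one, Matrix.scalar_apply,
          Matrix.smul_eq_diagonal_mul]
        congr 1
        ext i j
        simp [Matrix.diagonal, Matrix.one_apply, Matrix.mul_apply, Finset.sum_ite_eq]
      rw [this, ← matrix_charpoly_eval, f.charpoly_toMatrix b]
      exact h
    obtain ⟨x, hx, hx0⟩ := Submodule.exists_mem_ne_zero_of_ne_bot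
      (ne_of_gt (LinearMap.bot_lt_ker_of_det_eq_zero hb))
    refine Module.End.hasEigenvalue_of_hasEigenvector ⟨?_, hx0⟩
    rw [Module.End.mem_eigenspace_iff]
    have := hx
    rw [LinearMap.mem_ker, LinearMap.sub_apply, LinearMap.smul_apply, Module.End.one_apply,
      sub_eq_zero] at this
    exact this.symm

lemma aeval_semiconj {A : Type*} [Ring A] [Algebra ℂ A] {a b z : A} (h : a * z = z * b)
    (q : ℂ[X]) : aeval a q * z = z * aeval b q := by
  induction q using Polynomial.induction_on with
  | C r => simp [Algebra.commutes]
  | add p q hp hq => simp only [map_add, add_mul, mul_add, hp, hq]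
  | monomial n r hn =>
      have ha : aeval a (C r * X ^ (n+1)) = aeval a (C r * X ^ n) * a := by
        rw [pow_succ, ← mul_assoc, _root_.map_mul, aeval_X]
      have hb : aeval b (C r * X ^ (n+1)) = aeval b (C r * X ^ n) * b := by
        rw [pow_succ, ← mul_assoc, _root_.map_mul, aeval_X]
      rw [ha, hb, mul_assoc, h, ← mul_assoc, hn, mul_assoc]

lemma one_tmul_eq_zero {V : Type*} [AddCommGroup V] [Module ℝ V] (x : V)
    (h : (1:ℂ) ⊗ₜ[ℝ] x = (0 : ℂ ⊗[ℝ] V)) : x = 0 := by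
  have := congrArg ((TensorProduct.lid ℝ V).toLinearMap ∘ₗ
    (LinearMap.rTensor V Complex.reLm)) h
  simpa using this

lemma charpoly_transpose {n R : Type*} [Fintype n] [DecidableEq n] [CommRing R]
    (M : Matrix n n R) : Mᵀ.charpoly = M.charpoly := by
  have : Matrix.charmatrix Mᵀ = (Matrix.charmatrix M)ᵀ := by
    ext i j
    by_cases h : i = j <;>
      simp [Matrix.charmatrix_apply, Matrix.transpose_apply, Matrix.diagonal, h, eq_comm]
  rw [Matrix.charpoly, this, Matrix.det_transpose, Matrix.charpoly]

lemma charpoly_adjoint {V : Type*} [NormedAddCommGroup V] [InnerProductSpace ℝ V]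
    [FiniteDimensional ℝ V] (P : Module.End ℝ V) :
    (LinearMap.adjoint P : Module.End ℝ V).charpoly = P.charpoly := by
  let b := (stdOrthonormalBasis ℝ V)
  rw [← LinearMap.charpoly_toMatrix (LinearMap.adjoint P) b.toBasis,
    ← LinearMap.charpoly_toMatrix P b.toBasis, LinearMap.toMatrix_adjoint]
  have : (LinearMap.toMatrix b.toBasis b.toBasis P)ᴴ
      = (LinearMap.toMatrix b.toBasis b.toBasis P)ᵀ := by
    ext i j; simp [Matrix.conjTranspose_apply]
  rw [this, _root_.charpoly_transpose]

lemma baseChange_eig_conj {V : Type*} [AddCommGroup V] [Module ℝ V] [FiniteDimensional ℝ V]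
    (f : Module.End ℝ V) (μ : ℂ)
    (h : Module.End.HasEigenvalue (LinearMap.baseChange ℂ (f : V →ₗ[ℝ] V)) μ) :
    Module.End.HasEigenvalue (LinearMap.baseChange ℂ (f : V →ₗ[ℝ] V)) ((starRingEnd ℂ) μ) := by
  rw [end_hasEigenvalue_iff_isRoot_charpoly] at h ⊢
  rw [LinearMap.charpoly_baseChange] at h ⊢
  unfold Polynomial.IsRoot at h ⊢
  rw [eval_map] at h ⊢
  have hcmp : (starRingEnd ℂ).comp (algebraMap ℝ ℂ) = (algebraMap ℝ ℂ) := by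
    ext r; simp [Complex.conj_ofReal]
  have h2 := Polynomial.hom_eval₂ (LinearMap.charpoly (f : V →ₗ[ℝ] V)) (algebraMap ℝ ℂ)
    (starRingEnd ℂ) μ
  rw [hcmp] at h2
  rw [← h2, h, map_zero]

lemma sylvester_inj {V : Type*} [NormedAddCommGroup V] [InnerProductSpace ℝ V]
    [FiniteDimensional ℝ V] (P : Module.End ℝ V)
    (hσ : ∀ μ : ℂ, Module.End.HasEigenvalue (LinearMap.baseChange ℂ (P : V →ₗ[ℝ] V)) μ →
      ¬ Module.End.HasEigenvalue (LinearMap.baseChange ℂ (P : V →ₗ[ℝ] V)) (-μ))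
    (Z : Module.End ℝ V) (hZ : Z * P + LinearMap.adjoint P * Z = 0) : Z = 0 := by
  rcases subsingleton_or_nontrivial V with hV | hV
  · exact Subsingleton.elim _ _
  set B : Module.End ℂ (ℂ ⊗[ℝ] V) := LinearMap.baseChange ℂ (P : V →ₗ[ℝ] V) with hB
  set A : Module.End ℂ (ℂ ⊗[ℝ] V) :=
    LinearMap.baseChange ℂ ((LinearMap.adjoint P : Module.End ℝ V) : V →ₗ[ℝ] V) with hA
  set Z' : Module.End ℂ (ℂ ⊗[ℝ] V) := LinearMap.baseChange ℂ (Z : V →ₗ[ℝ] V) with hZ'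
  have φapp : ∀ f : Module.End ℝ V,
      (Module.End.baseChangeHom ℝ ℂ V) f = LinearMap.baseChange ℂ f := fun f => rfl
  have hbc : A * Z' = Z' * (-B) := by
    have h0 := congrArg (Module.End.baseChangeHom ℝ ℂ V) hZ
    rw [map_add, _root_.map_mul, _root_.map_mul, map_zero, φapp, φapp, φapp] at h0
    have h1 : A * Z' = -(Z' * B) := eq_neg_of_add_eq_zero_right h0
    exact h1.trans (mul_neg Z' B).symm
  set q : ℂ[X] := LinearMap.charpoly (-B) with hq
  have hq0 : aeval (-B) q = 0 := LinearMap.aeval_self_charpoly _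
  have h2 : aeval A q * Z' = 0 := by rw [aeval_semiconj hbc, hq0, mul_zero]
  have hchar : LinearMap.charpoly A = LinearMap.charpoly B := by
    rw [hA, hB, LinearMap.charpoly_baseChange, LinearMap.charpoly_baseChange, charpoly_adjoint]
  have hdeg : 0 < q.degree := by
    have hnd : q.natDegree = Module.finrank ℂ (ℂ ⊗[ℝ] V) := LinearMap.charpoly_natDegree (-B)
    have hpos : 0 < q.natDegree := by
      rw [hnd, Module.finrank_baseChange]
      exact Module.finrank_pos
    exact Polynomial.natDegree_pos_iff_degree_pos.mp hpos
  have hunit : IsUnit (aeval A q) := by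
    by_contra hnu
    have h0mem : (0:ℂ) ∈ spectrum ℂ (aeval A q) := spectrum.zero_mem_iff (R := ℂ) |>.mpr hnu
    rw [spectrum.map_polynomial_aeval_of_degree_pos A q hdeg] at h0mem
    obtain ⟨μ, hμA, hμq⟩ := h0mem
    have eigA : Module.End.HasEigenvalue A μ := Module.End.HasEigenvalue.of_mem_spectrum hμA
    have eigB : Module.End.HasEigenvalue B μ := by
      rw [end_hasEigenvalue_iff_isRoot_charpoly] at eigA ⊢
      rwa [hchar] at eigA
    have eignB : Module.End.HasEigenvalue (-B) μ :=
      (end_hasEigenvalue_iff_isRoot_charpoly _ _).mpr hμq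
    obtain ⟨v, hv⟩ := eignB.exists_hasEigenvector
    have hBv : B v = (-μ) • v := by
      have := hv.apply_eq_smul
      rw [LinearMap.neg_apply] at this
      rw [neg_smul, ← this, neg_neg]
    have eigBneg : Module.End.HasEigenvalue B (-μ) :=
      Module.End.hasEigenvalue_of_hasEigenvector
        ⟨Module.End.mem_eigenspace_iff.mpr hBv, hv.2⟩
    exact hσ μ eigB eigBneg
  have hZ'0 : Z' = 0 := hunit.mul_left_cancel (by rw [h2, mul_zero])
  ext x
  have : Z' ((1:ℂ) ⊗ₜ[ℝ] x) = 0 := by rw [hZ'0]; rfl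
  rw [hZ', LinearMap.baseChange_tmul] at this
  simpa using one_tmul_eq_zero _ this

section units
variable {V : Type*} [NormedAddCommGroup V] [InnerProductSpace ℝ V] [FiniteDimensional ℝ V]
lemma genlem {A : Type*} [Ring A] (s C : A) (h1 : s*C = C*s) (h2 : s*s = -1) :
    (s - C) * (-s - C) = C^2 + 1 := by
  have expand : (s - C) * (-s - C) = C*C - s*s + (C*s - s*C) := by noncomm_ring
  rw [expand, h1, sub_self, add_zero, h2, sub_neg_eq_add, ← pow_two]



lemma spec_isUnit (P : Module.End ℝ V)
    (hσ : ∀ μ : ℂ, Module.End.HasEigenvalue (LinearMap.baseChange ℂ (P : V →ₗ[ℝ] V)) μ →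
      ¬ Module.End.HasEigenvalue (LinearMap.baseChange ℂ (P : V →ₗ[ℝ] V)) (-μ)) :
    IsUnit P := by
  have h0 : ¬ Module.End.HasEigenvalue (LinearMap.baseChange ℂ (P : V →ₗ[ℝ] V)) 0 := by
    intro h
    exact hσ 0 h (by simpa using h)
  have hBu : IsUnit (LinearMap.baseChange ℂ (P : V →ₗ[ℝ] V)) := by
    rw [← spectrum.zero_notMem_iff ℂ]
    intro hmem
    exact h0 (Module.End.HasEigenvalue.of_mem_spectrum hmem)
  have hinj : Function.Injective P := by
    rw [← LinearMap.ker_eq_bot]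
    rw [Submodule.eq_bot_iff]
    intro x hx
    rw [LinearMap.mem_ker] at hx
    have : (LinearMap.baseChange ℂ (P : V →ₗ[ℝ] V)) ((1:ℂ) ⊗ₜ[ℝ] x) = 0 := by
      rw [LinearMap.baseChange_tmul, hx, TensorProduct.tmul_zero]
    have hBinj : Function.Injective (LinearMap.baseChange ℂ (P : V →ₗ[ℝ] V)) :=
      ((Module.End.isUnit_iff _).mp hBu).1
    have h1 : (1:ℂ) ⊗ₜ[ℝ] x = (0 : ℂ ⊗[ℝ] V) := by
      apply hBinj
      rw [this, map_zero]
    -- reuse one_tmul_eq_zero from earlier file; inline here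
    have := congrArg ((TensorProduct.lid ℝ V).toLinearMap ∘ₗ
      (LinearMap.rTensor V Complex.reLm)) h1
    simpa using this
  exact (Module.End.isUnit_iff P).mpr
    ⟨hinj, (LinearMap.injective_iff_surjective).mp hinj⟩

lemma spec_isUnit_sq_add_one (P : Module.End ℝ V)
    (hσ : ∀ μ : ℂ, Module.End.HasEigenvalue (LinearMap.baseChange ℂ (P : V →ₗ[ℝ] V)) μ →
      ¬ Module.End.HasEigenvalue (LinearMap.baseChange ℂ (P : V →ₗ[ℝ] V)) (-μ)) :
    IsUnit (P^2 + 1) := by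
  set B : Module.End ℂ (ℂ ⊗[ℝ] V) := LinearMap.baseChange ℂ (P : V →ₗ[ℝ] V) with hB
  have hiI : ¬ Module.End.HasEigenvalue B Complex.I := by
    intro h
    have h2 := baseChange_eig_conj P Complex.I h
    rw [Complex.conj_I] at h2
    exact hσ Complex.I h h2
  have hiI' : ¬ Module.End.HasEigenvalue B (-Complex.I) := by
    intro h
    have h2 := baseChange_eig_conj P (-Complex.I) h
    rw [map_neg, Complex.conj_I, neg_neg] at h2
    exact hσ (-Complex.I) h (by rwa [neg_neg])
  have hu1 : IsUnit (algebraMap ℂ (Module.End ℂ (ℂ ⊗[ℝ] V)) Complex.I - B) :=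
    spectrum.notMem_iff.mp (fun hmem => hiI (Module.End.HasEigenvalue.of_mem_spectrum hmem))
  have hu2 : IsUnit (algebraMap ℂ (Module.End ℂ (ℂ ⊗[ℝ] V)) (-Complex.I) - B) :=
    spectrum.notMem_iff.mp (fun hmem => hiI' (Module.End.HasEigenvalue.of_mem_spectrum hmem))
  have hprod : (algebraMap ℂ (Module.End ℂ (ℂ ⊗[ℝ] V)) Complex.I - B)
      * (algebraMap ℂ (Module.End ℂ (ℂ ⊗[ℝ] V)) (-Complex.I) - B) = B^2 + 1 := by
    rw [map_neg]
    refine genlem _ _ (Algebra.commutes Complex.I B) ?_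
    rw [← _root_.map_mul, Complex.I_mul_I]
    simp
  have hBu : IsUnit (B^2 + 1) := by
    rw [← hprod]
    exact hu1.mul hu2
  have hbc : LinearMap.baseChange ℂ ((P^2 + 1 : Module.End ℝ V) : V →ₗ[ℝ] V) = B^2 + 1 := by
    show (Module.End.baseChangeHom ℝ ℂ V) (P^2 + 1) = B^2 + 1
    rw [map_add, map_pow, _root_.map_one]
    rfl
  have hinj : Function.Injective (P^2 + 1 : Module.End ℝ V) := by
    rw [← LinearMap.ker_eq_bot, Submodule.eq_bot_iff]
    intro x hx
    rw [LinearMap.mem_ker] at hx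
    have h1 : (1:ℂ) ⊗ₜ[ℝ] x = (0 : ℂ ⊗[ℝ] V) := by
      apply ((Module.End.isUnit_iff _).mp hBu).1
      rw [← hbc, LinearMap.baseChange_tmul, hx, TensorProduct.tmul_zero, map_zero]
    have := congrArg ((TensorProduct.lid ℝ V).toLinearMap ∘ₗ
      (LinearMap.rTensor V Complex.reLm)) h1
    simpa using this
  exact (Module.End.isUnit_iff _).mpr
    ⟨hinj, (LinearMap.injective_iff_surjective).mp hinj⟩

end units

end aux

/-- with `Q = νᵗν + c·ψᵗψ`, `ρ = Pᵗ∘Q∘P`, `T = −Pᵗ − (Pᵗ)⁻¹`,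
`L = (P² + I)⁻¹∘P²`, if no complex eigenvalue `λ` of `P` has `−λ` also an eigenvalue and
`X` is the (unique) solution of `Xᵗ∘P + Pᵗ∘Xᵗ = −T∘ρ`, then `X + Xᵗ = Q + ρ`,
`T∘X = Xᵗ∘Tᵗ` and `X∘L + Lᵗ∘Xᵗ = ρ`. -/
theorem stmt_8 [NormedAddCommGroup V] [InnerProductSpace ℝ V] [FiniteDimensional ℝ V]
    [NormedAddCommGroup W] [InnerProductSpace ℝ W] [FiniteDimensional ℝ W]
    (P : Module.End ℝ V)
    (hσ : ∀ μ : ℂ, Module.End.HasEigenvalue (LinearMap.baseChange ℂ (P : V →ₗ[ℝ] V)) μ →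
      ¬ Module.End.HasEigenvalue (LinearMap.baseChange ℂ (P : V →ₗ[ℝ] V)) (-μ))
    (c : ℝ) (ψ : V →ₗ[ℝ] ℝ) (ν : V →ₗ[ℝ] W)
    (Q ρ T L : Module.End ℝ V)
    (hQ : Q = gram ν + c • gram ψ)
    (hρ : ρ = LinearMap.adjoint P * Q * P)
    (hT : T = -LinearMap.adjoint P - Ring.inverse (LinearMap.adjoint P))
    (hL : L = Ring.inverse (P ^ 2 + 1) * P ^ 2)
    (X : Module.End ℝ V)
    (hX : LinearMap.adjoint X * P + LinearMap.adjoint P * LinearMap.adjoint X = -(T * ρ)) :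
    X + LinearMap.adjoint X = Q + ρ ∧
    T * X = LinearMap.adjoint X * LinearMap.adjoint T ∧
    X * L + LinearMap.adjoint L * LinearMap.adjoint X = ρ := by
  have key : ∀ Z : Module.End ℝ V, Z * P + star P * Z = 0 → Z = 0 := fun Z h =>
    sylvester_inj P hσ Z (by rwa [LinearMap.star_eq_adjoint] at h)
  have hP : IsUnit P := spec_isUnit P hσ
  have hN : IsUnit (P^2 + 1) := spec_isUnit_sq_add_one P hσ
  simp only [← LinearMap.star_eq_adjoint] at hX hρ hT ⊢
  have hsP : IsUnit (star P) := hP.star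
  have hsN : IsUnit (star P^2 + 1) := by
    have := hN.star
    rwa [star_add, star_pow, star_one] at this
  have hg1 : star (gram ν) = gram ν := by
    rw [LinearMap.star_eq_adjoint]
    unfold gram
    rw [LinearMap.adjoint_comp, LinearMap.adjoint_adjoint]
  have hg2 : star (gram ψ) = gram ψ := by
    rw [LinearMap.star_eq_adjoint]
    unfold gram
    rw [LinearMap.adjoint_comp, LinearMap.adjoint_adjoint]
  have hQs : star Q = Q := by
    rw [hQ, star_add, hg1, star_smul, hg2, star_trivial]
  -- E1
  have E1 : star X * P + star P * star X = star P^2 * (Q*P) + Q*P := by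
    rw [hX, hT, hρ]
    have expand : -((-star P - Ring.inverse (star P)) * (star P * Q * P))
        = star P^2*(Q*P) + (Ring.inverse (star P) * star P) * (Q*P) := by noncomm_ring
    rw [expand, Ring.inverse_mul_cancel _ hsP, one_mul]
  -- E2 (adjoint of E1)
  have E2 : X * P + star P * X = star P * Q * P ^ 2 + star P * Q := by
    have h := congrArg star E1
    simp only [star_add, star_mul, star_star, star_pow, hQs] at h
    rw [add_comm] at h
    exact h
  -- Goal 1
  have g1 : X + star X = Q + ρ := by
    have h1 : (X + star X - (Q + ρ)) * P + star P * (X + star X - (Q + ρ)) = 0 := by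
      have expand : (X + star X - (Q + ρ)) * P + star P * (X + star X - (Q + ρ))
          = (X * P + star P * X) + (star X * P + star P * star X)
            - ((Q + ρ) * P + star P * (Q + ρ)) := by noncomm_ring
      rw [expand, E1, E2, hρ]
      noncomm_ring
    have := key _ h1
    rwa [sub_eq_zero] at this
  -- Goal G
  have G : (star P^2 + 1) * X * P = star P * star X * (P^2 + 1) := by
    have hD : ((star P^2+1) * X * P - star P * star X * (P^2+1)) * P
        + star P * ((star P^2+1) * X * P - star P * star X * (P^2+1))
        = (star P^2+1) * (X*P + star P * X) * P
          - star P * (star X * P + star P * star X) * (P^2+1) := by noncomm_ring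
    rw [E1, E2] at hD
    have h0 : ((star P^2+1) * X * P - star P * star X * (P^2+1)) * P
        + star P * ((star P^2+1) * X * P - star P * star X * (P^2+1)) = 0 := by
      rw [hD]; noncomm_ring
    have := key _ h0
    rwa [sub_eq_zero] at this
  -- Goal 2
  have e1 : star P * T = -(star P^2 + 1) := by
    rw [hT]
    have expand : star P * (-star P - Ring.inverse (star P))
        = -(star P^2) - star P * Ring.inverse (star P) := by noncomm_ring
    rw [expand, Ring.mul_inverse_cancel _ hsP]
    noncomm_ring
  have hsT : star T = -P - Ring.inverse P := by
    rw [hT, star_sub, star_neg, star_star, ← Ring.inverse_star, star_star]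
  have e2 : star T * P = -(P^2 + 1) := by
    rw [hsT]
    have expand : (-P - Ring.inverse P) * P
        = -(P^2) - Ring.inverse P * P := by noncomm_ring
    rw [expand, Ring.inverse_mul_cancel _ hP]
    noncomm_ring
  have g2 : T * X = star X * star T := by
    have h2 : star P * (T * X) * P = star P * (star X * star T) * P := by
      calc star P * (T * X) * P = (star P * T) * X * P := by noncomm_ring
        _ = -((star P^2+1) * X * P) := by rw [e1]; noncomm_ring
        _ = -(star P * star X * (P^2+1)) := by rw [G]
        _ = star P * star X * (star T * P) := by rw [e2]; noncomm_ring
        _ = star P * (star X * star T) * P := by noncomm_ring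
    exact hsP.mul_left_cancel (hP.mul_right_cancel h2)
  -- Goal 3
  have hsL : star L = star P^2 * Ring.inverse (star P^2 + 1) := by
    rw [hL, star_mul, star_pow, ← Ring.inverse_star, star_add, star_pow, star_one]
  have hcomm : Ring.inverse (P^2+1) * P^2 = P^2 * Ring.inverse (P^2+1) := by
    have h1 : Ring.inverse (P^2+1) * (P^2+1) = 1 := Ring.inverse_mul_cancel _ hN
    have h2 : (P^2+1) * Ring.inverse (P^2+1) = 1 := Ring.mul_inverse_cancel _ hN
    have e : (P^2 : Module.End ℝ V) = (P^2+1) - 1 := by noncomm_ring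
    calc Ring.inverse (P^2+1) * P^2 = Ring.inverse (P^2+1) * ((P^2+1) - 1) := by rw [← e]
      _ = Ring.inverse (P^2+1) * (P^2+1) - Ring.inverse (P^2+1) * 1 := by rw [mul_sub]
      _ = (P^2+1) * Ring.inverse (P^2+1) - 1 * Ring.inverse (P^2+1) := by
          rw [h1, h2, mul_one, one_mul]
      _ = ((P^2+1) - 1) * Ring.inverse (P^2+1) := by rw [sub_mul]
      _ = P^2 * Ring.inverse (P^2+1) := by rw [← e]
  have g3 : X * L + star L * star X = ρ := by
    have key3 : (star P^2 + 1) * (X * L + star L * star X) * (P^2+1)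
        = (star P^2 + 1) * ρ * (P^2+1) := by
      rw [hsL, hL, hcomm]
      calc (star P^2 + 1) * (X * (P^2 * Ring.inverse (P^2+1))
              + star P^2 * Ring.inverse (star P^2 + 1) * star X) * (P^2+1)
          = (star P^2 + 1) * X * P^2 * (Ring.inverse (P^2+1) * (P^2+1))
            + star P^2 * ((star P^2+1) * Ring.inverse (star P^2+1)) * star X * (P^2+1) := by
            noncomm_ring
        _ = (star P^2 + 1) * X * P^2 + star P^2 * star X * (P^2+1) := by
            rw [Ring.inverse_mul_cancel _ hN, Ring.mul_inverse_cancel _ hsN]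
            noncomm_ring
        _ = ((star P^2 + 1) * X * P) * P + star P^2 * star X * (P^2+1) := by noncomm_ring
        _ = (star P * star X * (P^2+1)) * P + star P^2 * star X * (P^2+1) := by rw [G]
        _ = star P * (star X * P + star P * star X) * (P^2+1) := by noncomm_ring
        _ = star P * (star P^2 * (Q*P) + Q*P) * (P^2+1) := by rw [E1]
        _ = (star P^2 + 1) * (star P * Q * P) * (P^2+1) := by noncomm_ring
      rw [hρ]
    exact hsN.mul_left_cancel (hN.mul_right_cancel key3)
  exact ⟨g1, g2, g3⟩
end

section
/- Let V be a finite-dimensional real inner product space and P an endomorphism of V such that no complex eigenvalue λ of P has −λ also an eigenvalue (so P is invertible). Set T = −Pᵗ − (Pᵗ)⁻¹. Let γ₁, …, γₙ ∈ V and v₁, …, vₙ ∈ ℝ with Σ_{i=1}^n v_i² = 1, set φ = −Σ_{i=1}^n v_i Pᵗγ_i and ρ = Pᵗ∘(Σ_{i=1}^n γ_iγ_iᵗ)∘P. Suppose Ω ∈ End(V) is invertible and satisfies Ωᵗ∘P + Pᵗ∘Ωᵗ + T∘ρ = 0 and T∘Ω = Ωᵗ∘Tᵗ. Then the numbers ṽ_i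 := v_i − ⟨γ_i, TᵗΩ⁻¹φ⟩ satisfy Σ_{i=1}^n ṽ_i² = 1. -/
open scoped TensorProduct RealInnerProductSpace

variable {V : Type*}

/-- The rank-one endomorphism `xyᵗ : w ↦ ⟨y, w⟩ x`. -/
noncomputable def rankOne [NormedAddCommGroup V] [InnerProductSpace ℝ V]
    (x y : V) : Module.End ℝ V :=
  LinearMap.smulRight (innerₛₗ ℝ y) x

/-- Key ring identity. -/
theorem ringKey {R : Type*} [Ring R] (P P' Q Q' Om Oa G : R)
    (hpp' : P * P' = 1) (hqq' : Q * Q' = 1) (hq'q : Q' * Q = 1)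
    (h1 : Oa * P + Q * Oa + (-Q - Q') * (Q * G * P) = 0)
    (h2 : (-Q - Q') * Om = Oa * (-P - P')) :
    Oa * P' * (-P - P') + (-Q - Q') * (Q' * Om) + (-Q - Q') * G * (-P - P') = 0 := by
  have e1 : (-Q - Q') * G = -(Q' * Oa) - Oa * P' := by
    have a0 : Q * ((-Q - Q') * G) * P = (-Q - Q') * (Q * G * P) + ((Q' * Q) - (Q * Q')) * (G * P) := by
      noncomm_ring
    rw [hq'q, hqq', sub_self, zero_mul, add_zero] at a0
    have a1 : (-Q - Q') * (Q * G * P) = -(Oa * P) - Q * Oa := by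
      have : (-Q - Q') * (Q * G * P) = -(Oa * P + Q * Oa) := by
        rw [eq_neg_iff_add_eq_zero, add_comm]; exact h1
      rw [this]; noncomm_ring
    have a2 : Q * ((-Q - Q') * G) * P = -(Oa * P) - Q * Oa := a0.trans a1
    have a3 : (-Q - Q') * G = Q' * (Q * ((-Q - Q') * G) * P) * P' := by
      rw [show Q' * (Q * ((-Q - Q') * G) * P) * P' = (Q' * Q) * ((-Q - Q') * G) * (P * P') by noncomm_ring,
        hq'q, hpp', one_mul, mul_one]
    rw [a3, a2]
    rw [show Q' * (-(Oa * P) - Q * Oa) * P' = -(Q' * Oa * (P * P')) - (Q' * Q) * (Oa * P') by noncomm_ring,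
      hpp', hq'q, mul_one, one_mul]
  rw [e1]
  have step : Oa * P' * (-P - P') + (-Q - Q') * (Q' * Om) + (-(Q' * Oa) - Oa * P') * (-P - P')
      = Q' * (Oa * P + Oa * P') - Q' * (Q * Om + Q' * Om) + ((Q' * Q) - (Q * Q')) * Om := by
    noncomm_ring
  rw [step, hq'q, hqq', sub_self, zero_mul, add_zero]
  have e2 : Oa * P + Oa * P' = Q * Om + Q' * Om := by
    have := h2.symm
    rw [show Oa * (-P - P') = -(Oa * P + Oa * P') by noncomm_ring,
      show (-Q - Q') * Om = -(Q * Om + Q' * Om) by noncomm_ring, neg_inj] at this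
    exact this
  rw [e2, sub_self]

/-- if `σ(P) ∩ (−σ(P)) = ∅`, `T = −Pᵗ − (Pᵗ)⁻¹`, `Σ vᵢ² = 1`,
`φ = −Σ vᵢ Pᵗγᵢ`, `ρ = Pᵗ∘(Σ γᵢγᵢᵗ)∘P`, and `Ω` is invertible with
`Ωᵗ∘P + Pᵗ∘Ωᵗ + T∘ρ = 0` and `T∘Ω = Ωᵗ∘Tᵗ`, then the numbers
`ṽᵢ = vᵢ − ⟨γᵢ, TᵗΩ⁻¹φ⟩` satisfy `Σ ṽᵢ² = 1`. -/
theorem stmt_15 [NormedAddCommGroup V] [InnerProductSpace ℝ V] [FiniteDimensional ℝ V]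
    (P : Module.End ℝ V)
    (hσ : ∀ μ : ℂ, Module.End.HasEigenvalue (LinearMap.baseChange ℂ (P : V →ₗ[ℝ] V)) μ →
      ¬ Module.End.HasEigenvalue (LinearMap.baseChange ℂ (P : V →ₗ[ℝ] V)) (-μ))
    (T : Module.End ℝ V)
    (hT : T = -LinearMap.adjoint P - Ring.inverse (LinearMap.adjoint P))
    (n : ℕ) (γ : Fin n → V) (v : Fin n → ℝ)
    (hv : ∑ i, v i ^ 2 = 1)
    (φ : V) (hφ : φ = -∑ i, v i • (LinearMap.adjoint P) (γ i))
    (ρ : Module.End ℝ V)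
    (hρ : ρ = LinearMap.adjoint P * (∑ i, rankOne (γ i) (γ i)) * P)
    (Ω : Module.End ℝ V) (hΩu : IsUnit Ω)
    (hΩ1 : LinearMap.adjoint Ω * P + LinearMap.adjoint P * LinearMap.adjoint Ω + T * ρ = 0)
    (hΩ2 : T * Ω = LinearMap.adjoint Ω * LinearMap.adjoint T) :
    ∑ i, (v i - ⟪γ i, (LinearMap.adjoint T * Ring.inverse Ω) φ⟫) ^ 2 = 1 := by
  -- P is invertible
  have hPinj : Function.Injective P := by
    rw [← LinearMap.ker_eq_bot]
    by_contra hk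
    obtain ⟨x, hx, hx0⟩ := Submodule.exists_mem_ne_zero_of_ne_bot hk
    have h1x : (1 : ℂ) ⊗ₜ[ℝ] x ≠ 0 := by
      intro h
      have := congrArg (TensorProduct.lift ((LinearMap.lsmul ℝ V).comp Complex.reLm)) h
      simp [TensorProduct.lift.tmul] at this
      exact hx0 this
    have h0 : Module.End.HasEigenvalue (LinearMap.baseChange ℂ (P : V →ₗ[ℝ] V)) 0 := by
      apply Module.End.hasEigenvalue_of_hasEigenvector (x := (1 : ℂ) ⊗ₜ[ℝ] x)
      refine ⟨?_, h1x⟩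
      rw [Module.End.mem_eigenspace_iff, zero_smul]
      have : P x = 0 := LinearMap.mem_ker.mp hx
      simp [LinearMap.baseChange_tmul, this]
    exact hσ 0 h0 (by rwa [neg_zero])
  have hPu : IsUnit P := (Module.End.isUnit_iff P).mpr
    ⟨hPinj, (LinearMap.injective_iff_surjective).mp hPinj⟩
  set Q : Module.End ℝ V := LinearMap.adjoint P with hQdef
  have hQstar : Q = star P := rfl
  have hQu : IsUnit Q := by rw [hQstar]; exact hPu.star
  set P' : Module.End ℝ V := Ring.inverse P with hP'def
  set Q' : Module.End ℝ V := Ring.inverse Q with hQ'def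
  set Om' : Module.End ℝ V := Ring.inverse Ω with hOm'def
  have hpp' : P * P' = 1 := Ring.mul_inverse_cancel P hPu
  have hp'p : P' * P = 1 := Ring.inverse_mul_cancel P hPu
  have hqq' : Q * Q' = 1 := Ring.mul_inverse_cancel Q hQu
  have hq'q : Q' * Q = 1 := Ring.inverse_mul_cancel Q hQu
  have hoo' : Ω * Om' = 1 := Ring.mul_inverse_cancel Ω hΩu
  -- adjoints
  have hstarQ : star Q = P := by rw [hQstar, star_star]
  have hstarQ' : star Q' = P' := by
    rw [hQ'def, hQstar, Ring.inverse_star, star_star, hP'def]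
  have hTa : LinearMap.adjoint T = -P - P' := by
    rw [← LinearMap.star_eq_adjoint, hT]
    rw [show -LinearMap.adjoint P - Ring.inverse (LinearMap.adjoint P) = -Q - Q' from rfl]
    rw [star_sub, star_neg, hstarQ, hstarQ']
  set G : Module.End ℝ V := ∑ i, rankOne (γ i) (γ i) with hGdef
  set Oa : Module.End ℝ V := LinearMap.adjoint Ω with hOadef
  -- key operator identity
  have key : Oa * P' * (-P - P') + (-Q - Q') * (Q' * Ω) + (-Q - Q') * G * (-P - P') = 0 := by
    apply ringKey P P' Q Q' Ω Oa G hpp' hqq' hq'q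
    · have := hΩ1
      rw [hρ, hT] at this
      exact this
    · have := hΩ2
      rw [hTa, hT] at this
      exact this
  have hTval : T = -Q - Q' := hT
  -- abbreviations
  set ψ : V := Om' φ with hψdef
  set w : V := LinearMap.adjoint T ψ with hwdef
  have hφψ : φ = Ω ψ := by
    rw [hψdef, ← Module.End.mul_apply, hoo', Module.End.one_apply]
  have happly : (LinearMap.adjoint T * Om') φ = w := rfl
  rw [happly]
  -- expand the square
  have expand : ∀ i ∈ Finset.univ, (v i - ⟪γ i, w⟫) ^ 2
      = (v i ^ 2 - 2 * (v i * ⟪γ i, w⟫)) + ⟪γ i, w⟫ ^ 2 := fun i _ => by ring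
  rw [Finset.sum_congr rfl expand, Finset.sum_add_distrib, Finset.sum_sub_distrib, hv,
    ← Finset.mul_sum]
  -- it suffices that  ∑ ⟪γ i, w⟫² = 2 * ∑ v i * ⟪γ i, w⟫
  have main : ∑ i, ⟪γ i, w⟫ ^ 2 = 2 * ∑ i, v i * ⟪γ i, w⟫ := by
    set g : V := ∑ i, v i • γ i with hgdef
    have hQg : Q g = -φ := by
      rw [hφ, hgdef, map_sum, neg_neg]
      exact Finset.sum_congr rfl fun i _ => by rw [map_smul]
    have hg : g = -((Q' * Ω) ψ) := by
      have : g = Q' (Q g) := by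
        rw [← Module.End.mul_apply, hq'q, Module.End.one_apply]
      rw [this, hQg, map_neg, hφψ]
      simp [Module.End.mul_apply]
    have hS1 : ∑ i, v i * ⟪γ i, w⟫ = -⟪(T * (Q' * Ω)) ψ, ψ⟫ := by
      have : ∑ i, v i * ⟪γ i, w⟫ = ⟪g, w⟫ := by
        rw [hgdef, sum_inner]
        exact Finset.sum_congr rfl fun i _ => (real_inner_smul_left _ _ _).symm
      rw [this, hg, hwdef, inner_neg_left, LinearMap.adjoint_inner_right]
      simp [Module.End.mul_apply]
    have hS2 : ∑ i, ⟪γ i, w⟫ ^ 2 = ⟪(T * G * LinearMap.adjoint T) ψ, ψ⟫ := by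
      have hGw : ∀ u : V, ⟪G u, u⟫ = ∑ i, ⟪γ i, u⟫ ^ 2 := by
        intro u
        rw [hGdef, LinearMap.sum_apply, sum_inner]
        refine Finset.sum_congr rfl fun i _ => ?_
        rw [rankOne, LinearMap.smulRight_apply, real_inner_smul_left]
        simp [innerₛₗ_apply_apply, sq]
      rw [← hGw w, hwdef, LinearMap.adjoint_inner_right]
      simp [Module.End.mul_apply]
    -- the first term of `key` has adjoint `T * (Q' * Ω)`
    have hadj : Oa * P' * (-P - P') = LinearMap.adjoint (T * (Q' * Ω)) := by
      rw [← LinearMap.star_eq_adjoint, star_mul, star_mul, hstarQ',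
        LinearMap.star_eq_adjoint, LinearMap.star_eq_adjoint, hTa, ← hOadef, mul_assoc]
    have hkeyψ := congrArg (fun (S : Module.End ℝ V) => ⟪S ψ, ψ⟫) key
    simp only [LinearMap.add_apply, inner_add_left, LinearMap.zero_apply,
      inner_zero_left] at hkeyψ
    rw [hadj, LinearMap.adjoint_inner_left, real_inner_comm] at hkeyψ
    rw [← hTval, ← hTa] at hkeyψ
    rw [hS2, hS1]
    linarith [hkeyψ]
  rw [main]; ring
end
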